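/- There is an absolute constant c such that for every m ≥ 1 and all m×m Boolean matrices A and B, the size of the grammar G (the sum of the lengths of all its productions) is at most c·m². More precisely, G has at most 2(3d+6) W-rules, at most (d²+1)² S-rules, at most m² A-rules, at most m² B-rules, and at most (d²+1)³ C-rules, where d = ⌈m^(1/3)⌉, each production having right-hand side of length at most 3. -/
import Mathlib


/- Formalization of (part of) the reduction of Boolean matrix multiplication
to context-free grammar parsing (Lee, "Fast context-free grammar parsing
requires fast Boolean matrix multiplication"). -/

namespace CFGBMM

/-- Nonterminals of the grammars of the reduction. -/
inductive NT : Type where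
  | S : NT                 -- start symbol
  | T : NT                 -- extra symbol of the CNF grammar G'
  | W : NT                 -- derives arbitrary nonempty substrings
  | Wl : ℕ → NT            -- `W_ℓ` of G'
  | X : ℕ → NT             -- `X_ℓ` of G'
  | A : ℕ → ℕ → NT         -- `A_{p,q}`
  | B : ℕ → ℕ → NT         -- `B_{p,q}`
  | C : ℕ → ℕ → NT         -- `C_{p,q}`
deriving DecidableEq

abbrev Sym : Type := Symbol ℕ NT

/-- `d = ⌈m^(1/3)⌉`. -/
noncomputable def dOf (m : ℕ) : ℕ := ⌈(m : ℝ) ^ ((1 : ℝ) / 3)⌉₊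

/-- The substring `w_ℓ ⋯ w_r` of the input string `w = w₁ ⋯ w_{3d+6}`
(in which `w_ℓ` is just the terminal `ℓ`), as a sentential form. -/
def seg (l r : ℕ) : List Sym := (List.range' l (r + 1 - l)).map Symbol.terminal

/-- W-rules of `G`:  `W → w_ℓ W | w_ℓ`  for `1 ≤ ℓ ≤ 3d+6`. -/
def WRules (d : ℕ) : Set (ContextFreeRule ℕ NT) :=
  {r | ∃ l, 1 ≤ l ∧ l ≤ 3 * d + 6 ∧
    (r = ⟨NT.W, [Symbol.terminal l, Symbol.nonterminal NT.W]⟩ ∨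
     r = ⟨NT.W, [Symbol.terminal l]⟩)}

/-- A-rules of `G`:  `A_{i₁,j₁} → w_{i₂} W w_{j₂+δ}`  for each nonzero entry
`a_{ij}` of `A` (here `i₁ = ⌊i/d⌋`, `i₂ = (i mod d) + 2`, `δ = d + 2`). -/
def ARules (m d : ℕ) (a : ℕ → ℕ → ℕ) : Set (ContextFreeRule ℕ NT) :=
  {r | ∃ i j, 1 ≤ i ∧ i ≤ m ∧ 1 ≤ j ∧ j ≤ m ∧ a i j = 1 ∧
    r = ⟨NT.A (i / d) (j / d),
      [Symbol.terminal (i % d + 2), Symbol.nonterminal NT.W,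
       Symbol.terminal (j % d + 2 + (d + 2))]⟩}

/-- B-rules of `G`:  `B_{i₁,j₁} → w_{i₂+1+δ} W w_{j₂+2δ}`  for each nonzero
entry `b_{ij}` of `B`. -/
def BRules (m d : ℕ) (b : ℕ → ℕ → ℕ) : Set (ContextFreeRule ℕ NT) :=
  {r | ∃ i j, 1 ≤ i ∧ i ≤ m ∧ 1 ≤ j ∧ j ≤ m ∧ b i j = 1 ∧
    r = ⟨NT.B (i / d) (j / d),
      [Symbol.terminal (i % d + 2 + 1 + (d + 2)), Symbol.nonterminal NT.W,
       Symbol.terminal (j % d + 2 + 2 * (d + 2))]⟩}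

/-- C-rules:  `C_{p,q} → A_{p,r} B_{r,q}`  for all `0 ≤ p, q, r ≤ d²`. -/
def CRules (d : ℕ) : Set (ContextFreeRule ℕ NT) :=
  {r | ∃ p q t, p ≤ d ^ 2 ∧ q ≤ d ^ 2 ∧ t ≤ d ^ 2 ∧
    r = ⟨NT.C p q, [Symbol.nonterminal (NT.A p t), Symbol.nonterminal (NT.B t q)]⟩}

/-- S-rules of `G`:  `S → W C_{p,q} W`  for all `0 ≤ p, q ≤ d²`. -/
def SRules (d : ℕ) : Set (ContextFreeRule ℕ NT) :=
  {r | ∃ p q, p ≤ d ^ 2 ∧ q ≤ d ^ 2 ∧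
    r = ⟨NT.S, [Symbol.nonterminal NT.W, Symbol.nonterminal (NT.C p q),
      Symbol.nonterminal NT.W]⟩}

/-- The production set of the grammar `G` of the reduction. -/
def RulesG (m d : ℕ) (a b : ℕ → ℕ → ℕ) : Set (ContextFreeRule ℕ NT) :=
  WRules d ∪ ARules m d a ∪ BRules m d b ∪ CRules d ∪ SRules d

/-- The size of a grammar: the sum of the lengths of all its productions
(a production `A → α` has length `1 + |α|`). -/
noncomputable def gsize (R : Set (ContextFreeRule ℕ NT)) : ℕ :=
  ∑ᶠ r ∈ R, (1 + r.output.length)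

/-- The set of nonterminals occurring in a rule set. -/
def ntsOf (R : Set (ContextFreeRule ℕ NT)) : Set NT :=
  {n | ∃ r ∈ R, r.input = n ∨ Symbol.nonterminal n ∈ r.output}



open scoped Classical

private lemma ncard_le_finset {α : Type*} (F : Finset α) {S : Set α} (h : S ⊆ ↑F) :
    S.ncard ≤ F.card :=
  (Set.ncard_le_ncard h F.finite_toSet).trans_eq (Set.ncard_coe_finset F)

private lemma gsize_le {S : Set (ContextFreeRule ℕ NT)} (h : S.Finite)
    (hf : ∀ r ∈ S, r.output.length ≤ 3) : gsize S ≤ 4 * S.ncard := by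
  unfold gsize
  conv_lhs => rw [← h.coe_toFinset]
  rw [finsum_mem_coe_finset, Set.ncard_eq_toFinset_card S h]
  calc ∑ r ∈ h.toFinset, (1 + r.output.length) ≤ h.toFinset.card * 4 := by
        apply Finset.sum_le_card_nsmul
        intro r hr
        have := hf r (h.mem_toFinset.mp hr)
        omega
    _ = 4 * h.toFinset.card := by ring

private lemma dOf_cube_le (m : ℕ) (hm : 1 ≤ m) : (dOf m) ^ 3 ≤ 8 * m := by
  set x : ℝ := (m : ℝ) ^ ((1:ℝ)/3) with hx
  have hx1 : 1 ≤ x := by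
    rw [hx]
    apply Real.one_le_rpow (by exact_mod_cast hm) (by norm_num)
  have hceil : ((dOf m : ℕ) : ℝ) ≤ 2 * x := by
    have := Nat.ceil_lt_add_one (le_trans zero_le_one hx1)
    unfold dOf
    nlinarith
  have hx3 : x ^ 3 = (m : ℝ) := by
    rw [hx, ← Real.rpow_natCast (_ ^ _) 3, ← Real.rpow_mul (by positivity)]
    norm_num
  have : (((dOf m : ℕ)) : ℝ) ^ 3 ≤ 8 * m := by
    calc (((dOf m : ℕ)) : ℝ) ^ 3 ≤ (2*x)^3 := by
          apply pow_le_pow_left₀ (Nat.cast_nonneg _) hceil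
      _ = 8 * x^3 := by ring
      _ = 8 * m := by rw [hx3]
  exact_mod_cast this

noncomputable def Wfin (d : ℕ) : Finset (ContextFreeRule ℕ NT) :=
  (Finset.Icc 1 (3*d+6)).biUnion (fun l =>
    ({⟨NT.W, [Symbol.terminal l, Symbol.nonterminal NT.W]⟩,
      ⟨NT.W, [Symbol.terminal l]⟩} : Finset (ContextFreeRule ℕ NT)))

private lemma WRules_sub (d : ℕ) : WRules d ⊆ ↑(Wfin d) := by
  rintro r ⟨l, h1, h2, h3 | h3⟩ <;>
  · simp only [Wfin, Finset.coe_biUnion, Set.mem_iUnion, Finset.mem_coe,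
      Finset.mem_Icc, Finset.mem_insert, Finset.mem_singleton]
    exact ⟨l, by simp [h1, h2], by simp [h3]⟩

private lemma Wfin_card (d : ℕ) : (Wfin d).card ≤ 2 * (3*d+6) := by
  calc (Wfin d).card ≤ ∑ l ∈ Finset.Icc 1 (3*d+6), (({⟨NT.W, [Symbol.terminal l, Symbol.nonterminal NT.W]⟩,
      ⟨NT.W, [Symbol.terminal l]⟩} : Finset (ContextFreeRule ℕ NT))).card :=
        Finset.card_biUnion_le
    _ ≤ ∑ _l ∈ Finset.Icc 1 (3*d+6), 2 := by
        apply Finset.sum_le_sum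
        intro l _
        exact (Finset.card_insert_le _ _).trans (by rw [Finset.card_singleton])
    _ ≤ 2 * (3*d+6) := by simp [Nat.card_Icc, mul_comm]

noncomputable def Afin (m d : ℕ) : Finset (ContextFreeRule ℕ NT) :=
  ((Finset.Icc 1 m) ×ˢ (Finset.Icc 1 m)).image (fun p =>
    ⟨NT.A (p.1 / d) (p.2 / d),
      [Symbol.terminal (p.1 % d + 2), Symbol.nonterminal NT.W,
       Symbol.terminal (p.2 % d + 2 + (d + 2))]⟩)

private lemma ARules_sub (m d : ℕ) (a : ℕ → ℕ → ℕ) : ARules m d a ⊆ ↑(Afin m d) := by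
  rintro r ⟨i, j, h1, h2, h3, h4, _, h6⟩
  simp only [Afin, Finset.coe_image, Set.mem_image, Finset.mem_coe, Finset.mem_product,
    Finset.mem_Icc]
  exact ⟨(i, j), ⟨⟨h1, h2⟩, h3, h4⟩, h6.symm⟩

private lemma Afin_card (m d : ℕ) : (Afin m d).card ≤ m ^ 2 := by
  calc (Afin m d).card ≤ ((Finset.Icc 1 m) ×ˢ (Finset.Icc 1 m)).card :=
        Finset.card_image_le
    _ ≤ m ^ 2 := by simp [Finset.card_product, Nat.card_Icc, sq]

noncomputable def Bfin (m d : ℕ) : Finset (ContextFreeRule ℕ NT) :=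
  ((Finset.Icc 1 m) ×ˢ (Finset.Icc 1 m)).image (fun p =>
    ⟨NT.B (p.1 / d) (p.2 / d),
      [Symbol.terminal (p.1 % d + 2 + 1 + (d + 2)), Symbol.nonterminal NT.W,
       Symbol.terminal (p.2 % d + 2 + 2 * (d + 2))]⟩)

private lemma BRules_sub (m d : ℕ) (b : ℕ → ℕ → ℕ) : BRules m d b ⊆ ↑(Bfin m d) := by
  rintro r ⟨i, j, h1, h2, h3, h4, _, h6⟩
  simp only [Bfin, Finset.coe_image, Set.mem_image, Finset.mem_coe, Finset.mem_product,
    Finset.mem_Icc]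
  exact ⟨(i, j), ⟨⟨h1, h2⟩, h3, h4⟩, h6.symm⟩

private lemma Bfin_card (m d : ℕ) : (Bfin m d).card ≤ m ^ 2 := by
  calc (Bfin m d).card ≤ ((Finset.Icc 1 m) ×ˢ (Finset.Icc 1 m)).card :=
        Finset.card_image_le
    _ ≤ m ^ 2 := by simp [Finset.card_product, Nat.card_Icc, sq]

noncomputable def Cfin (d : ℕ) : Finset (ContextFreeRule ℕ NT) :=
  ((Finset.range (d^2+1)) ×ˢ (Finset.range (d^2+1)) ×ˢ (Finset.range (d^2+1))).image
    (fun p => ⟨NT.C p.1 p.2.1,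
      [Symbol.nonterminal (NT.A p.1 p.2.2), Symbol.nonterminal (NT.B p.2.2 p.2.1)]⟩)

private lemma CRules_sub (d : ℕ) : CRules d ⊆ ↑(Cfin d) := by
  rintro r ⟨p, q, t, h1, h2, h3, h4⟩
  simp only [Cfin, Finset.coe_image, Set.mem_image, Finset.mem_coe, Finset.mem_product,
    Finset.mem_range]
  refine ⟨(p, q, t), ⟨?_, ?_, ?_⟩, h4.symm⟩ <;> simp <;> omega

private lemma Cfin_card (d : ℕ) : (Cfin d).card ≤ (d^2+1) ^ 3 := by
  calc (Cfin d).card ≤ _ := Finset.card_image_le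
    _ ≤ (d^2+1) ^ 3 := by simp [Finset.card_product]; ring_nf; omega

noncomputable def Sfin (d : ℕ) : Finset (ContextFreeRule ℕ NT) :=
  ((Finset.range (d^2+1)) ×ˢ (Finset.range (d^2+1))).image
    (fun p => ⟨NT.S, [Symbol.nonterminal NT.W, Symbol.nonterminal (NT.C p.1 p.2),
      Symbol.nonterminal NT.W]⟩)

private lemma SRules_sub (d : ℕ) : SRules d ⊆ ↑(Sfin d) := by
  rintro r ⟨p, q, h1, h2, h3⟩
  simp only [Sfin, Finset.coe_image, Set.mem_image, Finset.mem_coe, Finset.mem_product,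
    Finset.mem_range]
  refine ⟨(p, q), ⟨?_, ?_⟩, h3.symm⟩ <;> simp <;> omega

private lemma Sfin_card (d : ℕ) : (Sfin d).card ≤ (d^2+1) ^ 2 := by
  calc (Sfin d).card ≤ _ := Finset.card_image_le
    _ ≤ (d^2+1) ^ 2 := by simp [Finset.card_product, sq]

/-- The grammar `G` has size `O(m²)`: there is an absolute constant `c` such
that for every `m ≥ 1` and all `m × m` Boolean matrices `A`, `B`, the sum of
the lengths of the productions of `G` is at most `c·m²`; more precisely, `G`
has at most `2(3d+6)` W-rules, `(d²+1)²` S-rules, `m²` A-rules, `m²` B-rules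
and `(d²+1)³` C-rules, each with right-hand side of length at most `3`. -/
theorem grammar_size_quadratic :
    ∃ c : ℕ, ∀ m : ℕ, 1 ≤ m → ∀ a b : ℕ → ℕ → ℕ,
      (∀ i j, a i j = 0 ∨ a i j = 1) → (∀ i j, b i j = 0 ∨ b i j = 1) →
      gsize (RulesG m (dOf m) a b) ≤ c * m ^ 2 ∧
      (WRules (dOf m)).ncard ≤ 2 * (3 * dOf m + 6) ∧
      (SRules (dOf m)).ncard ≤ ((dOf m) ^ 2 + 1) ^ 2 ∧
      (ARules m (dOf m) a).ncard ≤ m ^ 2 ∧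
      (BRules m (dOf m) b).ncard ≤ m ^ 2 ∧
      (CRules (dOf m)).ncard ≤ ((dOf m) ^ 2 + 1) ^ 3 ∧
      (∀ r ∈ RulesG m (dOf m) a b, r.output.length ≤ 3) := by
  use 5000
  intro m hm a b _ _
  set d := dOf m with hd
  have hWn : (WRules d).ncard ≤ 2 * (3 * d + 6) :=
    (ncard_le_finset _ (WRules_sub d)).trans (Wfin_card d)
  have hAn : (ARules m d a).ncard ≤ m ^ 2 :=
    (ncard_le_finset _ (ARules_sub m d a)).trans (Afin_card m d)
  have hBn : (BRules m d b).ncard ≤ m ^ 2 :=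
    (ncard_le_finset _ (BRules_sub m d b)).trans (Bfin_card m d)
  have hCn : (CRules d).ncard ≤ (d^2+1) ^ 3 :=
    (ncard_le_finset _ (CRules_sub d)).trans (Cfin_card d)
  have hSn : (SRules d).ncard ≤ (d^2+1) ^ 2 :=
    (ncard_le_finset _ (SRules_sub d)).trans (Sfin_card d)
  have hWf : (WRules d).Finite := Set.Finite.subset (Wfin d).finite_toSet (WRules_sub d)
  have hAf : (ARules m d a).Finite := Set.Finite.subset (Afin m d).finite_toSet (ARules_sub m d a)
  have hBf : (BRules m d b).Finite := Set.Finite.subset (Bfin m d).finite_toSet (BRules_sub m d b)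
  have hCf : (CRules d).Finite := Set.Finite.subset (Cfin d).finite_toSet (CRules_sub d)
  have hSf : (SRules d).Finite := Set.Finite.subset (Sfin d).finite_toSet (SRules_sub d)
  have hGf : (RulesG m d a b).Finite := by
    unfold RulesG
    exact (((hWf.union hAf).union hBf).union hCf).union hSf
  have hlen : ∀ r ∈ RulesG m d a b, r.output.length ≤ 3 := by
    rintro r ((((h | h) | h) | h) | h)
    · obtain ⟨l, _, _, h3 | h3⟩ := h <;> subst h3 <;> simp
    · obtain ⟨i, j, _, _, _, _, _, h6⟩ := h; subst h6; simp
    · obtain ⟨i, j, _, _, _, _, _, h6⟩ := h; subst h6; simp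
    · obtain ⟨p, q, t, _, _, _, h4⟩ := h; subst h4; simp
    · obtain ⟨p, q, _, _, h3⟩ := h; subst h3; simp
  refine ⟨?_, hWn, hSn, hAn, hBn, hCn, hlen⟩
  have hcube : d ^ 3 ≤ 8 * m := dOf_cube_le m hm
  have hd1 : 1 ≤ d := by
    rw [hd]
    exact Nat.ceil_pos.mpr (Real.rpow_pos_of_pos (by exact_mod_cast hm) _)
  have hn : (RulesG m d a b).ncard ≤ 2 * (3*d+6) + m^2 + m^2 + (d^2+1)^3 + (d^2+1)^2 := by
    unfold RulesG
    calc (WRules d ∪ ARules m d a ∪ BRules m d b ∪ CRules d ∪ SRules d).ncard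
        ≤ (WRules d ∪ ARules m d a ∪ BRules m d b ∪ CRules d).ncard + (SRules d).ncard :=
          Set.ncard_union_le _ _
      _ ≤ (WRules d ∪ ARules m d a ∪ BRules m d b).ncard + (CRules d).ncard
            + (SRules d).ncard := by
          have := Set.ncard_union_le (WRules d ∪ ARules m d a ∪ BRules m d b) (CRules d)
          omega
      _ ≤ (WRules d ∪ ARules m d a).ncard + (BRules m d b).ncard + (CRules d).ncard
            + (SRules d).ncard := by
          have := Set.ncard_union_le (WRules d ∪ ARules m d a) (BRules m d b)
          omega
      _ ≤ (WRules d).ncard + (ARules m d a).ncard + (BRules m d b).ncard + (CRules d).ncard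
            + (SRules d).ncard := by
          have := Set.ncard_union_le (WRules d) (ARules m d a)
          omega
      _ ≤ _ := by omega
  have hsz : gsize (RulesG m d a b) ≤ 4 * (RulesG m d a b).ncard := gsize_le hGf hlen
  have hd6 : (d^2+1)^3 ≤ 512 * m^2 := by
    have h0 : d^2 + 1 ≤ 2 * d^2 := by nlinarith
    have h1 : (d^2+1)^3 ≤ (2*d^2)^3 := Nat.pow_le_pow_left h0 3
    have h2 : (2*d^2)^3 = 8 * (d^3)^2 := by ring
    have h3 : (d^3)^2 ≤ (8*m)^2 := Nat.pow_le_pow_left hcube 2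
    have h4 : (8*m)^2 = 64 * m^2 := by ring
    omega
  have hd2 : (d^2+1)^2 ≤ 512 * m^2 := by
    have h0 : (d^2+1)^2 ≤ (d^2+1)^3 := Nat.pow_le_pow_right (by omega) (by norm_num)
    omega
  have hm21 : 1 ≤ m^2 := by nlinarith
  have hdm : d ≤ 8 * m^2 := by nlinarith [Nat.pow_le_pow_left (le_refl d) 3]
  have h60 : 2 * (3*d+6) ≤ 60 * m^2 := by omega
  calc gsize (RulesG m d a b) ≤ 4 * (RulesG m d a b).ncard := hsz
    _ ≤ 4 * (2 * (3*d+6) + m^2 + m^2 + (d^2+1)^3 + (d^2+1)^2) := by omega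
    _ ≤ 5000 * m ^ 2 := by omega
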